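/- Let S and A be nonempty finite sets and let 𝒫 ⊆ Δ(S)^{S×A} be a compact (not necessarily convex) uncertainty set. The following three statements are equivalent: (1) 𝒫 is sa-tractable; (2) for every stationary policy π ∈ Δ(A)^S, every r ∈ ℝ^{S×A×S} and every γ ∈ [0,1), there exists P̂ ∈ 𝒫 such that û^π = v^{π,P̂}; (3) 𝒫 satisfies the sa-SSP. -/

import Mathlib

open scoped BigOperators

namespace RMDP

variable {S A : Type*} [Fintype S] [Fintype A]

def IsKernel (P : S → A → S → ℝ) : Prop := ∀ s a, P s a ∈ stdSimplex ℝ S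

def IsPolicy (π : S → A → ℝ) : Prop := ∀ s, π s ∈ stdSimplex ℝ A

def NextStateIndep (r : S → A → S → ℝ) : Prop :=
  ∀ (s : S) (a : A) (s' s'' : S), r s a s' = r s a s''

noncomputable def minOver {K : Type*} (K0 : Set K) (f : K → ℝ) : ℝ := sInf (f '' K0)

noncomputable def maxOver {K : Type*} (K0 : Set K) (f : K → ℝ) : ℝ := sSup (f '' K0)

noncomputable def TpiP (π : S → A → ℝ) (r : S → A → S → ℝ) (γ : ℝ)
    (P : S → A → S → ℝ) (v : S → ℝ) : S → ℝ :=
  fun s => ∑ a, π s a * ∑ s', P s a s' * (r s a s' + γ * v s')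

noncomputable def Tpi (US : Set (S → A → S → ℝ)) (π : S → A → ℝ)
    (r : S → A → S → ℝ) (γ : ℝ) (v : S → ℝ) : S → ℝ :=
  fun s => minOver US (fun P => ∑ a, π s a * ∑ s', P s a s' * (r s a s' + γ * v s'))

noncomputable def TpiHat (US : Set (S → A → S → ℝ)) (π : S → A → ℝ)
    (r : S → A → S → ℝ) (γ : ℝ) (v : S → ℝ) : S → ℝ :=
  fun s => ∑ a, π s a * minOver US (fun P => ∑ s', P s a s' * (r s a s' + γ * v s'))

noncomputable def Topt (US : Set (S → A → S → ℝ)) (r : S → A → S → ℝ) (γ : ℝ)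
    (v : S → ℝ) : S → ℝ :=
  fun s => maxOver (stdSimplex ℝ A)
    (fun p => minOver US (fun P => ∑ a, p a * ∑ s', P s a s' * (r s a s' + γ * v s')))

def IsHPolicy (π : List (S × A) → S → A → ℝ) : Prop := ∀ h s, π h s ∈ stdSimplex ℝ A

noncomputable def expRHH (π : List (S × A) → S → A → ℝ)
    (Q : List (S × A) → S → A → S → ℝ) (r : S → A → S → ℝ) :
    ℕ → List (S × A) → S → ℝ
  | 0, h, s => ∑ a, π h s a * ∑ s', Q (h ++ [(s, a)]) s a s' * r s a s'
  | (t + 1), h, s =>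
      ∑ a, π h s a * ∑ s', Q (h ++ [(s, a)]) s a s' * expRHH π Q r t (h ++ [(s, a)]) s'

noncomputable def vHH (π : List (S × A) → S → A → ℝ)
    (Q : List (S × A) → S → A → S → ℝ) (r : S → A → S → ℝ) (γ : ℝ) (s : S) : ℝ :=
  ∑' t : ℕ, γ ^ t * expRHH π Q r t [] s

def STractable (US : Set (S → A → S → ℝ)) : Prop :=
  ∀ π : S → A → ℝ, IsPolicy π →
    ∀ (r : S → A → S → ℝ) (γ : ℝ), 0 ≤ γ → γ < 1 →
      ∀ v : (S → A → S → ℝ) → S → ℝ, (∀ P ∈ US, TpiP π r γ P (v P) = v P) →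
        ∀ u : S → ℝ, Tpi US π r γ u = u →
          ∀ μ ∈ stdSimplex ℝ S,
            minOver US (fun P => ∑ s, μ s * v P s) = ∑ s, μ s * u s

def SATractable (US : Set (S → A → S → ℝ)) : Prop :=
  ∀ π : S → A → ℝ, IsPolicy π →
    ∀ (r : S → A → S → ℝ) (γ : ℝ), 0 ≤ γ → γ < 1 →
      ∀ v : (S → A → S → ℝ) → S → ℝ, (∀ P ∈ US, TpiP π r γ P (v P) = v P) →
        ∀ uhat : S → ℝ, TpiHat US π r γ uhat = uhat →
          ∀ μ ∈ stdSimplex ℝ S,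
            minOver US (fun P => ∑ s, μ s * v P s) = ∑ s, μ s * uhat s

def WeakSTractable (US : Set (S → A → S → ℝ)) : Prop :=
  ∀ π : S → A → ℝ, IsPolicy π →
    ∀ (r : S → A → S → ℝ), NextStateIndep r → ∀ γ : ℝ, 0 ≤ γ → γ < 1 →
      ∀ v : (S → A → S → ℝ) → S → ℝ, (∀ P ∈ US, TpiP π r γ P (v P) = v P) →
        ∀ u : S → ℝ, Tpi US π r γ u = u →
          ∀ μ ∈ stdSimplex ℝ S,
            minOver US (fun P => ∑ s, μ s * v P s) = ∑ s, μ s * u s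

def WeakSATractable (US : Set (S → A → S → ℝ)) : Prop :=
  ∀ π : S → A → ℝ, IsPolicy π →
    ∀ (r : S → A → S → ℝ), NextStateIndep r → ∀ γ : ℝ, 0 ≤ γ → γ < 1 →
      ∀ v : (S → A → S → ℝ) → S → ℝ, (∀ P ∈ US, TpiP π r γ P (v P) = v P) →
        ∀ uhat : S → ℝ, TpiHat US π r γ uhat = uhat →
          ∀ μ ∈ stdSimplex ℝ S,
            minOver US (fun P => ∑ s, μ s * v P s) = ∑ s, μ s * uhat s

def SSPs (US : Set (S → A → S → ℝ)) : Prop :=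
  ∀ V : S → A → S → ℝ, ∃ Pstar ∈ US, ∀ s : S, ∀ P ∈ US,
    (∑ a, ∑ s', Pstar s a s' * V s a s') ≤ ∑ a, ∑ s', P s a s' * V s a s'

def SSPsa (US : Set (S → A → S → ℝ)) : Prop :=
  ∀ V : S → A → S → ℝ, ∃ Pstar ∈ US, ∀ (s : S) (a : A), ∀ P ∈ US,
    (∑ s', Pstar s a s' * V s a s') ≤ ∑ s', P s a s' * V s a s'

def WeakSSPs (US : Set (S → A → S → ℝ)) : Prop :=
  ∀ π : S → A → ℝ, IsPolicy π → ∀ V : S → ℝ, ∃ Pstar ∈ US, ∀ s : S, ∀ P ∈ US,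
    (∑ a, π s a * ∑ s', Pstar s a s' * V s') ≤ ∑ a, π s a * ∑ s', P s a s' * V s'

def WeakSSPsa (US : Set (S → A → S → ℝ)) : Prop :=
  ∀ V : S → ℝ, ∃ Pstar ∈ US, ∀ (s : S) (a : A), ∀ P ∈ US,
    (∑ s', Pstar s a s' * V s') ≤ ∑ s', P s a s' * V s'


/-- Feasibility of the vector `û^π`. -/
def SAFeasible {S A : Type*} [Fintype S] [Fintype A] (US : Set (S → A → S → ℝ)) : Prop :=
  ∀ π : S → A → ℝ, IsPolicy π →
    ∀ (r : S → A → S → ℝ) (γ : ℝ), 0 ≤ γ → γ < 1 →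
      ∀ uhat : S → ℝ, TpiHat US π r γ uhat = uhat → ∃ Phat ∈ US, TpiP π r γ Phat uhat = uhat

section Aux

lemma minOver_le_of_bdd {K : Type*} {US : Set K} {f : K → ℝ} {P : K}
    (hb : BddBelow (f '' US)) (hP : P ∈ US) : minOver US f ≤ f P :=
  csInf_le hb ⟨P, hP, rfl⟩

lemma minOver_eq_of_isMin {K : Type*} {US : Set K} {f : K → ℝ} {P : K}
    (hP : P ∈ US) (hmin : ∀ Q ∈ US, f P ≤ f Q) : minOver US f = f P :=
  IsLeast.csInf_eq ⟨⟨P, hP, rfl⟩, by rintro z ⟨Q, hQ, rfl⟩; exact hmin Q hQ⟩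

lemma cont_lin (s : S) (a : A) (c : S → ℝ) :
    Continuous (fun P : S → A → S → ℝ => ∑ s', P s a s' * c s') := by
  apply continuous_finset_sum
  intro s' _
  exact (((continuous_apply s').comp ((continuous_apply a).comp
    (continuous_apply s) : Continuous fun P : S → A → S → ℝ => P s a))).mul continuous_const

lemma bdd_lin (US : Set (S → A → S → ℝ)) (hcpt : IsCompact US) (s : S) (a : A) (c : S → ℝ) :
    BddBelow ((fun P : S → A → S → ℝ => ∑ s', P s a s' * c s') '' US) :=
  (hcpt.image (cont_lin s a c)).bddBelow

lemma kernel_sum_ge {P : S → A → S → ℝ} (hP : IsKernel P) (s : S) (a : A)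
    {f : S → ℝ} {m : ℝ} (hm : ∀ s', m ≤ f s') :
    m ≤ ∑ s', P s a s' * f s' := by
  have h1 : (∑ s', P s a s' * m) ≤ ∑ s', P s a s' * f s' :=
    Finset.sum_le_sum fun s' _ => mul_le_mul_of_nonneg_left (hm s') ((hP s a).1 s')
  calc m = ∑ s', P s a s' * m := by rw [← Finset.sum_mul, (hP s a).2, one_mul]
    _ ≤ _ := h1

lemma policy_comb_ge {π : S → A → ℝ} (hπ : IsPolicy π) {P : S → A → S → ℝ}
    (hP : IsKernel P) (s : S) {f : S → ℝ} {m : ℝ} (hm : ∀ s', m ≤ f s') :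
    m ≤ ∑ a, π s a * ∑ s', P s a s' * f s' := by
  have h1 : (∑ a, π s a * m) ≤ ∑ a, π s a * ∑ s', P s a s' * f s' :=
    Finset.sum_le_sum fun a _ =>
      mul_le_mul_of_nonneg_left (kernel_sum_ge hP s a hm) ((hπ s).1 a)
  calc m = ∑ a, π s a * m := by rw [← Finset.sum_mul, (hπ s).2, one_mul]
    _ ≤ _ := h1

lemma TpiP_sub (π : S → A → ℝ) (r : S → A → S → ℝ) (γ : ℝ) (P : S → A → S → ℝ)
    (x y : S → ℝ) (s : S) :
    TpiP π r γ P x s - TpiP π r γ P y s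
      = γ * ∑ a, π s a * ∑ s', P s a s' * (x s' - y s') := by
  simp only [TpiP, Finset.mul_sum]
  rw [← Finset.sum_sub_distrib]
  refine Finset.sum_congr rfl fun a _ => ?_
  rw [← Finset.sum_sub_distrib]
  refine Finset.sum_congr rfl fun s' _ => ?_
  ring

lemma nonneg_of_ge_gamma_inf [Nonempty S] {γ : ℝ} (hγ0 : 0 ≤ γ) (hγ1 : γ < 1) (f : S → ℝ)
    (h : ∀ s, γ * (Finset.univ.inf' Finset.univ_nonempty f) ≤ f s) : ∀ s, 0 ≤ f s := by
  set m := Finset.univ.inf' Finset.univ_nonempty f with hm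
  obtain ⟨s0, -, hs0⟩ := Finset.exists_mem_eq_inf' (Finset.univ_nonempty (α := S)) f
  have h1 : γ * m ≤ m := by
    calc γ * m ≤ f s0 := h s0
      _ = m := hs0.symm
  have hm0 : 0 ≤ m := by nlinarith
  intro s
  exact le_trans hm0 (Finset.inf'_le f (Finset.mem_univ s))

lemma uhat_le_v [Nonempty S] {US : Set (S → A → S → ℝ)} (hcpt : IsCompact US)
    {π : S → A → ℝ} (hπ : IsPolicy π) (r : S → A → S → ℝ) {γ : ℝ}
    (hγ0 : 0 ≤ γ) (hγ1 : γ < 1)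
    {P : S → A → S → ℝ} (hPU : P ∈ US) (hP : IsKernel P)
    {x uhat : S → ℝ} (hx : TpiP π r γ P x = x) (hu : TpiHat US π r γ uhat = uhat) :
    ∀ s, uhat s ≤ x s := by
  have key : ∀ s, 0 ≤ x s - uhat s := by
    apply nonneg_of_ge_gamma_inf hγ0 hγ1 (fun s => x s - uhat s)
    intro s
    have h1 : TpiHat US π r γ uhat s ≤ TpiP π r γ P uhat s := by
      apply Finset.sum_le_sum; intro a _
      refine mul_le_mul_of_nonneg_left ?_ ((hπ s).1 a)
      exact minOver_le_of_bdd (bdd_lin US hcpt s a (fun s' => r s a s' + γ * uhat s')) hPU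
    have h2 := TpiP_sub π r γ P x uhat s
    have h3 : (Finset.univ.inf' Finset.univ_nonempty fun s => x s - uhat s)
        ≤ ∑ a, π s a * ∑ s', P s a s' * (x s' - uhat s') :=
      policy_comb_ge hπ hP s (fun s' => Finset.inf'_le _ (Finset.mem_univ s'))
    have h4 := mul_le_mul_of_nonneg_left h3 hγ0
    have hx' := congrFun hx s
    have hu' := congrFun hu s
    linarith
  intro s; linarith [key s]

lemma fixed_unique [Nonempty S] {π : S → A → ℝ} (hπ : IsPolicy π)
    {P : S → A → S → ℝ} (hP : IsKernel P) (r : S → A → S → ℝ) {γ : ℝ}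
    (hγ0 : 0 ≤ γ) (hγ1 : γ < 1) {x y : S → ℝ}
    (hx : TpiP π r γ P x = x) (hy : TpiP π r γ P y = y) : x = y := by
  have key : ∀ x y : S → ℝ, TpiP π r γ P x = x → TpiP π r γ P y = y → ∀ s, y s ≤ x s := by
    intro x y hx hy
    have h : ∀ s, 0 ≤ x s - y s := by
      apply nonneg_of_ge_gamma_inf hγ0 hγ1 (fun s => x s - y s)
      intro s
      have h2 := TpiP_sub π r γ P x y s
      have h3 : (Finset.univ.inf' Finset.univ_nonempty fun s => x s - y s)
          ≤ ∑ a, π s a * ∑ s', P s a s' * (x s' - y s') :=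
        policy_comb_ge hπ hP s (fun s' => Finset.inf'_le _ (Finset.mem_univ s'))
      have h4 := mul_le_mul_of_nonneg_left h3 hγ0
      have hx' := congrFun hx s
      have hy' := congrFun hy s
      linarith
    intro s; linarith [h s]
  funext s; exact le_antisymm (key y x hy hx s) (key x y hx hy s)

lemma feasible_to_tractable [Nonempty S] {US : Set (S → A → S → ℝ)}
    (hker : ∀ P ∈ US, IsKernel P) (hcpt : IsCompact US)
    (hF : SAFeasible US) : SATractable US := by
  intro π hπ r γ hγ0 hγ1 v hv uhat huhat μ hμ
  obtain ⟨Phat, hPhatU, hPhat⟩ := hF π hπ r γ hγ0 hγ1 uhat huhat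
  have hvP : v Phat = uhat := fixed_unique hπ (hker _ hPhatU) r hγ0 hγ1 (hv _ hPhatU) hPhat
  have hlow : ∀ P ∈ US, (∑ s, μ s * uhat s) ≤ ∑ s, μ s * v P s := by
    intro P hPU
    apply Finset.sum_le_sum; intro s _
    exact mul_le_mul_of_nonneg_left
      (uhat_le_v hcpt hπ r hγ0 hγ1 hPU (hker P hPU) (hv P hPU) huhat s) (hμ.1 s)
  refine IsLeast.csInf_eq ⟨⟨Phat, hPhatU, by simp only; rw [hvP]⟩, ?_⟩
  rintro z ⟨P, hPU, rfl⟩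
  exact hlow P hPU

lemma sspsa_to_feasible {US : Set (S → A → S → ℝ)} (h : SSPsa US) : SAFeasible US := by
  intro π hπ r γ hγ0 hγ1 uhat huhat
  obtain ⟨Pstar, hPU, hmin⟩ := h (fun s a s' => r s a s' + γ * uhat s')
  refine ⟨Pstar, hPU, ?_⟩
  funext s
  have hkey : TpiP π r γ Pstar uhat s = TpiHat US π r γ uhat s := by
    simp only [TpiP, TpiHat]
    refine Finset.sum_congr rfl fun a _ => ?_
    congr 1
    exact (minOver_eq_of_isMin (f := fun Q : S → A → S → ℝ =>
      ∑ s', Q s a s' * (r s a s' + γ * uhat s')) hPU (fun Q hQ => hmin s a Q hQ)).symm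
  rw [hkey, huhat]

lemma tractable_to_sspsa [Nonempty S] [Nonempty A] {US : Set (S → A → S → ℝ)}
    (hne : US.Nonempty) (hcpt : IsCompact US) (hT : SATractable US) : SSPsa US := by
  intro V
  have hcA : (0 : ℝ) < (Fintype.card A : ℝ) := by
    exact_mod_cast Fintype.card_pos
  have hcS : (0 : ℝ) < (Fintype.card S : ℝ) := by
    exact_mod_cast Fintype.card_pos
  set π : S → A → ℝ := fun _ _ => (Fintype.card A : ℝ)⁻¹ with hπdef
  have hπ : IsPolicy π := by
    intro s
    constructor
    · intro a; positivity
    · simp [hπdef, Finset.sum_const, Finset.card_univ, mul_comm]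
  set v : (S → A → S → ℝ) → S → ℝ :=
    fun P s => ∑ a, π s a * ∑ s', P s a s' * V s a s' with hvdef
  set m : S → A → ℝ := fun s a => minOver US (fun P => ∑ s', P s a s' * V s a s') with hmdef
  set uhat : S → ℝ := fun s => ∑ a, π s a * m s a with hudef
  have hv : ∀ P ∈ US, TpiP π V 0 P (v P) = v P := by
    intro P _; funext s
    simp [TpiP, hvdef]
  have huhat : TpiHat US π V 0 uhat = uhat := by
    funext s
    simp [TpiHat, hudef, hmdef]
  set μ : S → ℝ := fun _ => (Fintype.card S : ℝ)⁻¹ with hμdef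
  have hμ : μ ∈ stdSimplex ℝ S := by
    constructor
    · intro s; positivity
    · simp [hμdef, Finset.sum_const, Finset.card_univ]
  have heq := hT π hπ V 0 le_rfl one_pos v hv uhat huhat μ hμ
  have hcont : ContinuousOn (fun P : S → A → S → ℝ => ∑ s, μ s * v P s) US := by
    apply Continuous.continuousOn
    apply continuous_finset_sum
    intro s _
    apply Continuous.mul continuous_const
    apply continuous_finset_sum
    intro a _
    exact Continuous.mul continuous_const (cont_lin s a (fun s' => V s a s'))
  obtain ⟨Pstar, hPU, hmin⟩ := hcpt.exists_isMinOn hne hcont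
  have hmineq : minOver US (fun P => ∑ s, μ s * v P s) = ∑ s, μ s * v Pstar s :=
    minOver_eq_of_isMin hPU (fun Q hQ => hmin hQ)
  have hsum : (∑ s, μ s * uhat s) = ∑ s, μ s * v Pstar s := by
    rw [← heq, hmineq]
  have hterm : ∀ s a, m s a ≤ ∑ s', Pstar s a s' * V s a s' := fun s a =>
    minOver_le_of_bdd (bdd_lin US hcpt s a (fun s' => V s a s')) hPU
  have hstep1 : ∀ s, uhat s ≤ v Pstar s := by
    intro s
    exact Finset.sum_le_sum fun a _ =>
      mul_le_mul_of_nonneg_left (hterm s a) ((hπ s).1 a)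
  have hseq : ∀ s, uhat s = v Pstar s := by
    have hle : ∀ s ∈ Finset.univ, μ s * uhat s ≤ μ s * v Pstar s := fun s _ =>
      mul_le_mul_of_nonneg_left (hstep1 s) (hμ.1 s)
    have := (Finset.sum_eq_sum_iff_of_le hle).mp hsum
    intro s
    have h2 := this s (Finset.mem_univ s)
    have hμne : μ s ≠ 0 := ne_of_gt (by simp [hμdef]; positivity)
    exact mul_left_cancel₀ hμne h2
  have hma : ∀ s a, m s a = ∑ s', Pstar s a s' * V s a s' := by
    intro s a
    have hle : ∀ a ∈ Finset.univ, π s a * m s a ≤ π s a * ∑ s', Pstar s a s' * V s a s' :=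
      fun a _ => mul_le_mul_of_nonneg_left (hterm s a) ((hπ s).1 a)
    have hsum2 : (∑ a, π s a * m s a) = ∑ a, π s a * ∑ s', Pstar s a s' * V s a s' := hseq s
    have := (Finset.sum_eq_sum_iff_of_le hle).mp hsum2
    have h2 := this a (Finset.mem_univ a)
    have hπne : π s a ≠ 0 := ne_of_gt (by simp [hπdef]; positivity)
    exact mul_left_cancel₀ hπne h2
  refine ⟨Pstar, hPU, fun s a P hPU' => ?_⟩
  calc (∑ s', Pstar s a s' * V s a s') = m s a := (hma s a).symm
    _ ≤ ∑ s', P s a s' * V s a s' :=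
      minOver_le_of_bdd (bdd_lin US hcpt s a (fun s' => V s a s')) hPU'

end Aux

theorem stmt3 {S A : Type*} [Fintype S] [Fintype A] [Nonempty S] [Nonempty A]
    (US : Set (S → A → S → ℝ)) (hne : US.Nonempty) (hker : ∀ P ∈ US, IsKernel P)
    (hcpt : IsCompact US) :
    (SATractable US ↔ SAFeasible US) ∧ (SAFeasible US ↔ SSPsa US) := by
  have h1 : SAFeasible US → SATractable US := feasible_to_tractable hker hcpt
  have h2 : SATractable US → SSPsa US := tractable_to_sspsa hne hcpt
  have h3 : SSPsa US → SAFeasible US := sspsa_to_feasible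
  exact ⟨⟨fun hT => h3 (h2 hT), h1⟩, ⟨fun hF => h2 (h1 hF), h3⟩⟩

end RMDP
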